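/- Let r and s be binary relations on a type such that the composition s ; s is empty. If the transitive closure of r ; (s ∪ id) is irreflexive, then the transitive closure of r ∪ s is irreflexive. (Equivalently: any cycle in r ∪ s, given that no two s-edges can be adjacent, yields a cycle in r ; s^?.) -/

import Mathlib

/-- if `s ; s = ∅` and `r ; s^?` is acyclic, then `r ∪ s` is acyclic. -/
theorem stmt14 {α : Type*} (r s : α → α → Prop)
    (hss : ∀ a b c, s a b → s b c → False)
    (hacyc : ∀ a, ¬ Relation.TransGen (fun x z => ∃ y, r x y ∧ (s y z ∨ y = z)) a a) :
    ∀ a, ¬ Relation.TransGen (fun x y => r x y ∨ s x y) a a := by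
  set t : α → α → Prop := fun x z => ∃ y, r x y ∧ (s y z ∨ y = z) with ht
  have key : ∀ a b : α, Relation.TransGen (fun x y => r x y ∨ s x y) a b →
      Relation.TransGen t a b ∨ ∃ c, s a c ∧ Relation.ReflTransGen t c b := by
    intro a b h
    induction h using Relation.TransGen.head_induction_on with
    | single h =>
      rcases h with h | h
      · exact Or.inl (Relation.TransGen.single ⟨b, h, Or.inr rfl⟩)
      · exact Or.inr ⟨b, h, Relation.ReflTransGen.refl⟩
    | head hax _ ih =>
      rename_i x _
      rcases hax with hax | hax
      · rcases ih with ih | ⟨c, hxc, hcb⟩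
        · exact Or.inl (Relation.TransGen.head ⟨x, hax, Or.inr rfl⟩ ih)
        · exact Or.inl (Relation.TransGen.head' ⟨x, hax, Or.inl hxc⟩ hcb)
      · rcases ih with ih | ⟨c, hxc, _⟩
        · exact Or.inr ⟨x, hax, ih.to_reflTransGen⟩
        · exact absurd hxc (fun h => hss _ _ _ hax h)
  intro a ha
  rcases key a a ha with h | ⟨c, hac, hca⟩
  · exact hacyc a h
  · rcases hca.cases_tail with rfl | ⟨x, hcx, hxa⟩
    · exact hss _ _ _ hac hac
    · rcases hxa with ⟨y, hxy, hy | rfl⟩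
      · exact hss _ _ _ hy hac
      · exact hacyc c (Relation.TransGen.tail' hcx ⟨y, hxy, Or.inl hac⟩)
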